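/- arXiv:1210.0372 — 4 statements merged into one kernel-verified Lean document; each statement's English description precedes it below -/
import Mathlib

section
/- Let h(z,x,y) = Σ_{k≥0} (−1)^k q^{k(k−1)/2} · ∏_{j=0}^{k−1}(x + q^j y) / ∏_{j=1}^{k}(1 − q^j) · z^k as a formal power series in z over the field ℚ(q,x,y). Then h satisfies the functional equation h(qz) = h(z) + x·z·h(qz) + y·z·h(q²z), where h(qz) denotes the series obtained by substituting qz for z. -/
noncomputable section
open PowerSeries Finset

/-- The field `ℚ(q, x, y)` of rational functions in three indeterminates. -/
abbrev K : Type := FractionRing (MvPolynomial (Fin 3) ℚ)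

/-- The indeterminate `q`. -/
def q : K := algebraMap (MvPolynomial (Fin 3) ℚ) K (MvPolynomial.X 0)
/-- The indeterminate `x`. -/
def x : K := algebraMap (MvPolynomial (Fin 3) ℚ) K (MvPolynomial.X 1)
/-- The indeterminate `y`. -/
def y : K := algebraMap (MvPolynomial (Fin 3) ℚ) K (MvPolynomial.X 2)

/-- The coefficient `h_k(a,b) = (−1)^k q^{k(k−1)/2} ∏_{j=0}^{k−1}(a+q^j b) / ∏_{j=1}^{k}(1−q^j)`. -/
def hk (a b : K) (k : ℕ) : K :=
  (-1) ^ k * q ^ (k.choose 2) * (∏ j ∈ range k, (a + q ^ j * b)) /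
    (∏ j ∈ range k, (1 - q ^ (j + 1)))

/-- The series `h(z,a,b) = Σ_k h_k(a,b) z^k`. -/
def hser (a b : K) : PowerSeries K := PowerSeries.mk (hk a b)

lemma qpow_ne_one (n : ℕ) : q ^ (n + 1) ≠ 1 := by
  intro h
  have h1 : (MvPolynomial.X 0 : MvPolynomial (Fin 3) ℚ) ^ (n + 1) = 1 := by
    apply IsFractionRing.injective (MvPolynomial (Fin 3) ℚ) K
    simpa [q, map_pow] using h
  have h2 := congrArg (MvPolynomial.eval fun _ => (2 : ℚ)) h1
  simp only [map_pow, MvPolynomial.eval_X, map_one] at h2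
  have h3 : (1 : ℚ) < 2 ^ (n + 1) := one_lt_pow₀ one_lt_two (Nat.succ_ne_zero n)
  rw [h2] at h3
  exact lt_irrefl _ h3

lemma one_sub_qpow_ne (j : ℕ) : (1 : K) - q ^ (j + 1) ≠ 0 :=
  sub_ne_zero.mpr fun h => qpow_ne_one j h.symm

lemma D_ne_zero (k : ℕ) : (∏ j ∈ range k, ((1 : K) - q ^ (j + 1))) ≠ 0 :=
  prod_ne_zero_iff.mpr fun j _ => one_sub_qpow_ne j

lemma hk_rec (a b : K) (k : ℕ) :
    (1 - q ^ (k + 1)) * hk a b (k + 1) = -(q ^ k * (a + q ^ k * b)) * hk a b k := by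
  have h1 := D_ne_zero k
  have h2 := one_sub_qpow_ne k
  unfold hk
  rw [prod_range_succ, prod_range_succ, Nat.choose_succ_succ, Nat.choose_one_right,
    mul_div_assoc', mul_div_assoc', div_eq_div_iff (mul_ne_zero h1 h2) h1]
  ring

/-- The functional equation `h(qz) = h(z) + xz·h(qz) + yz·h(q²z)` for the series
`h(z,x,y) = Σ_k h_k(x,y) z^k`, as formal power series in `z` over `ℚ(q,x,y)`. -/
theorem h_functional_equation :
    rescale q (hser x y) =
      hser x y + C x * X * rescale q (hser x y)
        + C y * X * rescale (q ^ 2) (hser x y) := by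
  ext k
  cases k with
  | zero =>
      simp [hser, coeff_rescale, hk]
  | succ k =>
      simp only [map_add, coeff_rescale, mul_assoc, coeff_C_mul, coeff_succ_X_mul, hser,
        coeff_mk]
      linear_combination -hk_rec x y k

end
end

section
/- Let F(z,x,y) ∈ ℚ(q,x,y)[[z]] be the unique power series with constant term 1 satisfying F(z) = 1 + xz·F(z) + yz·F(z)·F(qz), and define f(z,x,y) = (x + y·F(z,x,y))/(x+y). Then f satisfies f(z,x,y) = 1 − xz·f(qz,x,y) + (x+y)·z·f(z,x,y)·f(qz,x,y). -/
noncomputable section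
open PowerSeries Finset

lemma rescale_C' (a c : K) : rescale a (C c) = C c := by
  ext n
  rw [coeff_rescale]
  cases n with
  | zero => simp
  | succ n => simp [coeff_C]

lemma xy_ne : x + y ≠ 0 := by
  rw [x, y, ← map_add]
  intro h
  rw [map_eq_zero_iff _ (IsFractionRing.injective (MvPolynomial (Fin 3) ℚ) K)] at h
  have := congrArg (MvPolynomial.coeff (Finsupp.single (1 : Fin 3) 1)) h
  simp [MvPolynomial.coeff_X', Finsupp.single_eq_single_iff] at this

/-- If `F(z,x,y)` is the power series with constant term `1` satisfying
`F = 1 + xz·F(z) + yz·F(z)F(qz)` and `f = (x + y·F)/(x+y)`, then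
`f(z) = 1 − xz·f(qz) + (x+y)z·f(z)·f(qz)` (formula (2.4)). -/
theorem f_functional_equation (F f : PowerSeries K)
    (h1 : constantCoeff F = 1)
    (hF : F = 1 + C x * X * F + C y * X * (F * rescale q F))
    (hf : f = C (x + y)⁻¹ * (C x + C y * F)) :
    f = 1 - C x * X * rescale q f + C (x + y) * X * (f * rescale q f) := by
  have hinv : C (x + y)⁻¹ * C (x + y) = 1 := by
    rw [← map_mul, inv_mul_cancel₀ xy_ne, map_one]
  have hv : C (x + y) = C x + C y := map_add _ _ _
  have hres : rescale q f = C (x + y)⁻¹ * (C x + C y * rescale q F) := by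
    rw [hf, map_mul, map_add, map_mul, rescale_C', rescale_C', rescale_C']
  rw [hres, hf]
  linear_combination
    (1 - C (x + y)⁻¹ * X * (C x + C y * F) * (C x + C y * rescale q F)) * hinv
      + C (x + y)⁻¹ * C y * hF - C (x + y)⁻¹ * hv

end
end

section
/- Let f(z,x,y) = (x + y·F(z,x,y))/(x+y) where F is the unique series with constant term 1 satisfying F(z)=1+xzF(z)+yzF(z)F(qz). Then f(z,x,y) = 1 + yz·F(z,x,y)·f(qz,x,y). -/
noncomputable section
open PowerSeries Finset

/-- With `F` the series with constant term `1` satisfying `F = 1 + xzF(z) + yzF(z)F(qz)`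
and `f = (x + yF)/(x+y)`, one has `f(z) = 1 + yz·F(z)·f(qz)`. -/
theorem f_in_terms_of_F (F f : PowerSeries K)
    (h1 : constantCoeff F = 1)
    (hF : F = 1 + C x * X * F + C y * X * (F * rescale q F))
    (hf : f = C (x + y)⁻¹ * (C x + C y * F)) :
    f = 1 + C y * X * (F * rescale q f) := by
  have hne : (x + y : K) ≠ 0 := by
    rw [x, y, ← map_add]
    intro h
    have h2 : (MvPolynomial.X 1 + MvPolynomial.X 2 : MvPolynomial (Fin 3) ℚ) = 0 :=
      IsFractionRing.injective (MvPolynomial (Fin 3) ℚ) K (by rw [map_zero]; exact h)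
    have h3 := congrArg (MvPolynomial.eval fun _ => (1 : ℚ)) h2
    simp at h3
  have hCne : (C (x + y)) ≠ 0 := by
    intro h
    exact hne (by simpa using congrArg (constantCoeff) h)
  have hrC : ∀ a : K, rescale q (C a) = C a := by
    intro a
    ext n
    rw [coeff_rescale]
    rcases n with _ | n <;> simp [coeff_C]
  have hrf : rescale q f = C (x + y)⁻¹ * (C x + C y * rescale q F) := by
    rw [hf, map_mul, map_add, map_mul, hrC, hrC, hrC]
  have key : C y * F = C y + C x * C y * X * F
      + C y * C y * X * (F * rescale q F) := by
    nth_rewrite 1 [hF]; ring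
  apply mul_left_cancel₀ hCne
  have hc : C (x + y) * C (x + y)⁻¹ = 1 := by
    rw [← map_mul, mul_inv_cancel₀ hne, map_one]
  calc C (x + y) * f = C x + C y * F := by
        rw [hf, ← mul_assoc, hc, one_mul]
    _ = C (x + y) + C y * X * (F * (C x + C y * rescale q F)) := by
        rw [map_add]; nth_rewrite 1 [key]; ring
    _ = C (x + y) * 1 + C y * X * F * (C (x + y) * rescale q f) := by
        have h2' : C (x + y) * rescale q f = C x + C y * rescale q F := by
          rw [hrf, ← mul_assoc, hc, one_mul]
        rw [h2']; ring
    _ = C (x + y) * (1 + C y * X * (F * rescale q f)) := by ring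

end
end

section
/- Define h(z,x,y) = Σ_{k≥0} (−1)^k q^{k(k−1)/2} ∏_{j=0}^{k−1}(x+q^j y)/∏_{j=1}^{k}(1−q^j) · z^k and let F(z,x,y) = h(qz,x,y)/h(z,x,y) (well-defined since h has constant term 1). Then F satisfies F(z,x,y) = 1 + xz·F(z,x,y) + yz·F(z,x,y)·F(qz,x,y). -/
noncomputable section
open PowerSeries Finset

lemma q_pow_ne_one (m : ℕ) (hm : m ≠ 0) : q ^ m ≠ 1 := by
  intro hcon
  have hinj := IsFractionRing.injective (MvPolynomial (Fin 3) ℚ) K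
  rw [q, ← map_pow, ← map_one (algebraMap (MvPolynomial (Fin 3) ℚ) K)] at hcon
  have := hinj hcon
  have h2 := congrArg MvPolynomial.constantCoeff this
  rw [map_pow, map_one, MvPolynomial.constantCoeff_X, zero_pow hm] at h2
  exact zero_ne_one h2

lemma prodD_ne (k : ℕ) : (∏ j ∈ range k, (1 - q ^ (j + 1))) ≠ 0 := by
  refine prod_ne_zero_iff.mpr fun j _ => ?_
  rw [sub_ne_zero]
  exact fun hcon => q_pow_ne_one (j + 1) (Nat.succ_ne_zero j) hcon.symm

lemma hk_succ (k : ℕ) :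
    (1 - q ^ (k + 1)) * hk x y (k + 1) = -(q ^ k * (x + q ^ k * y)) * hk x y k := by
  have hch : (k + 1).choose 2 = k.choose 2 + k := by
    rw [Nat.choose_succ_succ]
    simp [Nat.choose_one_right, Nat.add_comm]
  unfold hk
  rw [prod_range_succ, prod_range_succ, hch, pow_add, pow_succ]
  have d := prodD_ne k
  have dk : (1 - q ^ (k + 1)) ≠ 0 := by
    rw [sub_ne_zero]
    exact fun hcon => q_pow_ne_one (k + 1) (Nat.succ_ne_zero k) hcon.symm
  field_simp
  rw [div_eq_iff (by simpa [pow_succ] using dk)]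
  simp only [mul_comm y]
  ring

lemma hk_zero : hk x y 0 = 1 := by simp [hk]

lemma key : rescale q (hser x y) =
    hser x y + C x * X * rescale q (hser x y)
      + C y * X * rescale q (rescale q (hser x y)) := by
  ext n
  rw [mul_assoc, mul_assoc]
  cases n with
  | zero =>
      simp [coeff_rescale, hser, hk_zero]
  | succ k =>
      rw [map_add, map_add, coeff_C_mul, coeff_C_mul, coeff_succ_X_mul,
        coeff_succ_X_mul, coeff_rescale, coeff_rescale, rescale_rescale,
        coeff_rescale]
      simp only [hser, coeff_mk]
      have := hk_succ k
      have hmm : (q * q) ^ k = q ^ k * q ^ k := by ring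
      rw [hmm]
      linear_combination (-1 : K) * this

lemma hconst : constantCoeff (hser x y) = 1 := by
  simp [hser, ← coeff_zero_eq_constantCoeff, hk_zero]

lemma hconst_ne : constantCoeff (hser x y) ≠ 0 := by
  rw [hconst]; exact one_ne_zero

lemma rconst_ne : constantCoeff (rescale q (hser x y)) ≠ 0 := by
  rw [← coeff_zero_eq_constantCoeff, coeff_rescale, pow_zero, one_mul,
    coeff_zero_eq_constantCoeff, hconst]
  exact one_ne_zero

lemma rescale_inv : rescale q ((hser x y)⁻¹) = (rescale q (hser x y))⁻¹ := by
  rw [PowerSeries.eq_inv_iff_mul_eq_one rconst_ne, ← map_mul,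
    PowerSeries.inv_mul_cancel _ hconst_ne, map_one]

/-- With `F(z,x,y) = h(qz,x,y)/h(z,x,y)` (well-defined as `h` has constant term `1`),
`F` satisfies `F(z) = 1 + xz·F(z) + yz·F(z)·F(qz)`. -/
theorem F_quotient_functional_equation :
    rescale q (hser x y) * (hser x y)⁻¹ =
      1 + C x * X * (rescale q (hser x y) * (hser x y)⁻¹)
        + C y * X * ((rescale q (hser x y) * (hser x y)⁻¹) *
            rescale q (rescale q (hser x y) * (hser x y)⁻¹)) := by
  have hmul : (hser x y)⁻¹ * hser x y = 1 := PowerSeries.inv_mul_cancel _ hconst_ne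
  have rmul : (rescale q (hser x y))⁻¹ * rescale q (hser x y) = 1 :=
    PowerSeries.inv_mul_cancel _ rconst_ne
  have step : rescale q (hser x y) * (hser x y)⁻¹ *
      rescale q (rescale q (hser x y) * (hser x y)⁻¹) =
      rescale q (rescale q (hser x y)) * (hser x y)⁻¹ := by
    rw [map_mul, rescale_inv]
    calc rescale q (hser x y) * (hser x y)⁻¹ *
          (rescale q (rescale q (hser x y)) * (rescale q (hser x y))⁻¹)
        = rescale q (rescale q (hser x y)) * (hser x y)⁻¹ *
          ((rescale q (hser x y))⁻¹ * rescale q (hser x y)) := by ring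
      _ = rescale q (rescale q (hser x y)) * (hser x y)⁻¹ := by rw [rmul, mul_one]
  rw [step]
  have : (1 : K⟦X⟧) = hser x y * (hser x y)⁻¹ := by
    rw [mul_comm, hmul]
  rw [this]
  calc rescale q (hser x y) * (hser x y)⁻¹
      = (hser x y + C x * X * rescale q (hser x y)
          + C y * X * rescale q (rescale q (hser x y))) * (hser x y)⁻¹ := by
        rw [← key]
    _ = hser x y * (hser x y)⁻¹
        + C x * X * (rescale q (hser x y) * (hser x y)⁻¹)
        + C y * X * (rescale q (rescale q (hser x y)) * (hser x y)⁻¹) := by ring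

end
end
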